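/- Let R be a ring and let X and Y be ℤ-indexed chain complexes of R-modules. Then for every integer n there is an isomorphism of abelian groups H_n(Hom•(X,Y)) ≅ [X, Σ^{-n}Y], where [X, Σ^{-n}Y] denotes the abelian group of chain-homotopy classes of chain maps from X to Σ^{-n}Y. -/

import Mathlib

open CategoryTheory

universe u

variable {R : Type u} [Ring R]

/-- Degree-`n` component of the Hom-complex: families of maps `X_k → Y_{k+n}`. -/
abbrev HomDeg (X Y : ChainComplex (ModuleCat.{u} R) ℤ) (n : ℤ) : Type u :=
  ∀ k : ℤ, X.X k →ₗ[R] Y.X (k + n)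

/-- The differential of the Hom-complex: `(δ f)_k = d ∘ f_k − (−1)^n f_{k−1} ∘ d`. -/
def homDegD (X Y : ChainComplex (ModuleCat.{u} R) ℤ) (n : ℤ) :
    HomDeg X Y n →+ HomDeg X Y (n - 1) :=
  AddMonoidHom.mk' (fun f k =>
    (Y.d (k + n) (k + (n - 1))).hom.comp (f k) -
      ((Int.negOnePow n : ℤˣ) : ℤ) •
        ((Y.XIsoOfEq (show (k - 1) + n = k + (n - 1) by ring)).hom.hom.comp
          ((f (k - 1)).comp (X.d k (k - 1)).hom)))
    (by
      intro f g
      funext k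
      simp only [Pi.add_apply, LinearMap.comp_add, LinearMap.add_comp, smul_add]
      abel)

/-- Cast between components of the Hom-complex in propositionally equal degrees. -/
def homDegCast (X Y : ChainComplex (ModuleCat.{u} R) ℤ) {m n : ℤ} (h : m = n) :
    HomDeg X Y m ≃+ HomDeg X Y n := by subst h; exact AddEquiv.refl _

/-- The cycles of the Hom-complex in degree `n`. -/
def homCycles (X Y : ChainComplex (ModuleCat.{u} R) ℤ) (n : ℤ) :
    AddSubgroup (HomDeg X Y n) :=
  (homDegD X Y n).ker

/-- The boundaries of the Hom-complex in degree `n`. -/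
def homBoundaries (X Y : ChainComplex (ModuleCat.{u} R) ℤ) (n : ℤ) :
    AddSubgroup (HomDeg X Y n) :=
  (((homDegCast X Y (show (n + 1) - 1 = n by ring)).toAddMonoidHom).comp
    (homDegD X Y (n + 1))).range

/-- The `m`-fold suspension `Σ^m Y`: `(Σ^m Y)_k = Y_{k−m}` with differential `(−1)^m d`. -/
def shiftComplex (Y : ChainComplex (ModuleCat.{u} R) ℤ) (m : ℤ) :
    ChainComplex (ModuleCat.{u} R) ℤ where
  X k := Y.X (k - m)
  d i j := ((Int.negOnePow m : ℤˣ) : ℤ) • Y.d (i - m) (j - m)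
  shape i j h := by
    rw [Y.shape, smul_zero]
    intro hh
    simp only [ComplexShape.down_Rel] at h hh
    omega
  d_comp_d' i j k _ _ := by
    simp [CategoryTheory.Preadditive.comp_zsmul, CategoryTheory.Preadditive.zsmul_comp]


/-- The `n`-th homology of the Hom-complex `Hom•(X,Y)`. -/
def homHomology (X Y : ChainComplex (ModuleCat.{u} R) ℤ) (n : ℤ) : Type u :=
  homCycles X Y n ⧸ (homBoundaries X Y n).addSubgroupOf (homCycles X Y n)

noncomputable instance (X Y : ChainComplex (ModuleCat.{u} R) ℤ) (n : ℤ) :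
    AddCommGroup (homHomology X Y n) :=
  inferInstanceAs (AddCommGroup
    (homCycles X Y n ⧸ (homBoundaries X Y n).addSubgroupOf (homCycles X Y n)))

/-- The subgroup of null-homotopic chain maps. -/
def nullHomotopic (X Z : ChainComplex (ModuleCat.{u} R) ℤ) : AddSubgroup (X ⟶ Z) where
  carrier := {f | Nonempty (Homotopy f 0)}
  zero_mem' := ⟨Homotopy.refl 0⟩
  add_mem' := by
    rintro f g ⟨h⟩ ⟨h'⟩
    have := h.add h'
    rw [add_zero] at this
    exact ⟨this⟩
  neg_mem' := by
    rintro f ⟨h⟩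
    have := Homotopy.equivSubZero h.symm
    rw [zero_sub] at this
    exact ⟨this⟩

/-- The abelian group of chain-homotopy classes of chain maps `X ⟶ Z`. -/
def HomotopyClasses (X Z : ChainComplex (ModuleCat.{u} R) ℤ) : Type u :=
  (X ⟶ Z) ⧸ nullHomotopic X Z

noncomputable instance (X Z : ChainComplex (ModuleCat.{u} R) ℤ) :
    AddCommGroup (HomotopyClasses X Z) :=
  inferInstanceAs (AddCommGroup ((X ⟶ Z) ⧸ nullHomotopic X Z))

section Aux

open HomologicalComplex

variable (X Y : ChainComplex (ModuleCat.{u} R) ℤ) (n : ℤ)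

local notation "ε" => ((Int.negOnePow n : ℤˣ) : ℤ)

lemma eps_mul_eps : ε * ε = 1 := by
  rw [← Units.val_mul, Int.units_mul_self, Units.val_one]

/-- The shifted complex `Z := Σ^{-n} Y`. -/
local notation "Z" => shiftComplex Y (-n)

lemma Z_d (i j : ℤ) : (Z).d i j = ε • Y.d (i - -n) (j - -n) := by
  simp [shiftComplex]

/-- cast iso from `Y.X (k+n)` to `Z.X k`. -/
def castIso (k : ℤ) : Y.X (k + n) ≅ (Z).X k :=
  Y.XIsoOfEq (show k + n = k - -n by omega)

lemma homDeg_congr (f : HomDeg X Y n) {a b : ℤ} (h : a = b) :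
    (ModuleCat.ofHom (f a) : X.X a ⟶ Y.X (a + n)) =
      (X.XIsoOfEq h).hom ≫ (ModuleCat.ofHom (f b) : X.X b ⟶ Y.X (b + n)) ≫
        (Y.XIsoOfEq (show b + n = a + n by rw [h])).hom := by
  subst h
  simp [HomologicalComplex.XIsoOfEq_rfl]

lemma homDegCast_apply {m m' : ℤ} (h : m = m') (f : HomDeg X Y m) (k : ℤ) :
    (ModuleCat.ofHom (homDegCast X Y h f k) : X.X k ⟶ Y.X (k + m')) =
      (ModuleCat.ofHom (f k) : X.X k ⟶ Y.X (k + m)) ≫ (Y.XIsoOfEq (by rw [h])).hom := by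
  subst h
  simp [homDegCast, HomologicalComplex.XIsoOfEq_rfl]

lemma mem_homCycles_iff (f : HomDeg X Y n) :
    f ∈ homCycles X Y n ↔ ∀ k : ℤ,
      (ModuleCat.ofHom (f k) : X.X k ⟶ Y.X (k + n)) ≫ Y.d (k + n) (k + (n - 1)) =
        ε • (X.d k (k - 1) ≫ (ModuleCat.ofHom (f (k - 1)) : X.X (k - 1) ⟶ Y.X (k - 1 + n)) ≫
          (Y.XIsoOfEq (show (k - 1) + n = k + (n - 1) by ring)).hom) := by
  constructor
  · intro hf k
    have h0 : homDegD X Y n f = 0 := hf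
    have h1 : homDegD X Y n f k = 0 := by rw [h0]; rfl
    simp only [homDegD, AddMonoidHom.mk'_apply, sub_eq_zero] at h1
    exact ModuleCat.hom_ext h1
  · intro hf
    show homDegD X Y n f = 0
    funext k
    simp only [homDegD, AddMonoidHom.mk'_apply, Pi.zero_apply, sub_eq_zero]
    have := (hf k).symm
    exact congrArg ModuleCat.Hom.hom (hf k)

lemma homCycles_cond {f : HomDeg X Y n} (hf : f ∈ homCycles X Y n)
    {i j : ℤ} (hij : j + 1 = i) :
    (ModuleCat.ofHom (f i) : X.X i ⟶ Y.X (i + n)) ≫ Y.d (i + n) (j + n) =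
      ε • (X.d i j ≫ (ModuleCat.ofHom (f j) : X.X j ⟶ Y.X (j + n))) := by
  have h1 := (mem_homCycles_iff X Y n f).1 hf i
  have h2 := congrArg (· ≫ (Y.XIsoOfEq (show i + (n - 1) = j + n by omega)).hom) h1
  rw [homDeg_congr X Y n f (show i - 1 = j by omega)] at h2
  simpa only [Category.assoc, HomologicalComplex.d_comp_XIsoOfEq_hom,
    HomologicalComplex.XIsoOfEq_hom_comp_XIsoOfEq_hom, HomologicalComplex.XIsoOfEq_rfl,
    HomologicalComplex.d_comp_XIsoOfEq_hom_assoc,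
    Iso.refl_hom, Category.comp_id, Preadditive.zsmul_comp, Category.assoc] using h2

/-- The chain map `X ⟶ Z` associated to a cycle. -/
def cycleToHom (f : homCycles X Y n) : X ⟶ Z where
  f k := (ModuleCat.ofHom (f.1 k) : X.X k ⟶ Y.X (k + n)) ≫ (castIso Y n k).hom
  comm' i j hij := by
    replace hij : j + 1 = i := hij
    rw [Z_d]
    have := homCycles_cond X Y n f.2 hij
    calc ((ModuleCat.ofHom (f.1 i) : X.X i ⟶ Y.X (i + n)) ≫ (castIso Y n i).hom) ≫
            (ε • Y.d (i - -n) (j - -n))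
        = ε • ((ModuleCat.ofHom (f.1 i) : X.X i ⟶ Y.X (i + n)) ≫ Y.d (i + n) (j + n) ≫
            (Y.XIsoOfEq (show j + n = j - -n by omega)).hom) := by
          dsimp only [shiftComplex]
          simp only [Preadditive.comp_zsmul, Category.assoc, castIso,
            HomologicalComplex.XIsoOfEq_hom_comp_d,
            HomologicalComplex.d_comp_XIsoOfEq_hom]
      _ = X.d i j ≫ ((ModuleCat.ofHom (f.1 j) : X.X j ⟶ Y.X (j + n)) ≫
            (Y.XIsoOfEq (show j + n = j - -n by omega)).hom) := by
          rw [← Category.assoc, this]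
          simp only [Preadditive.zsmul_comp, smul_smul, eps_mul_eps, one_smul,
            Category.assoc, castIso]

lemma homToCycle_mem (g : X ⟶ Z) :
    (fun k => ((g.f k : X.X k ⟶ (Z).X k) ≫ (castIso Y n k).inv : X.X k ⟶ Y.X (k + n)).hom) ∈
      homCycles X Y n := by
  rw [mem_homCycles_iff]
  intro k
  have hcomm := g.comm k (k - 1)
  rw [Z_d] at hcomm
  have hY : Y.d (k - -n) (k + (n - 1)) =
      Y.d (k - -n) (k - 1 - -n) ≫ (Y.XIsoOfEq (show k - 1 - -n = k + (n - 1) by omega)).hom :=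
    (HomologicalComplex.d_comp_XIsoOfEq_hom Y _ _).symm
  calc ((g.f k : X.X k ⟶ (Z).X k) ≫ (castIso Y n k).inv) ≫ Y.d (k + n) (k + (n - 1))
      = (g.f k : X.X k ⟶ (Z).X k) ≫ Y.d (k - -n) (k + (n - 1)) := by
        dsimp only [shiftComplex]
        simp only [Category.assoc, castIso, HomologicalComplex.XIsoOfEq_inv_comp_d]
    _ = ε • ((g.f k : X.X k ⟶ (Z).X k) ≫ (ε • Y.d (k - -n) (k - 1 - -n)) ≫
          (Y.XIsoOfEq (show k - 1 - -n = k + (n - 1) by omega)).hom) := by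
        rw [hY]
        dsimp only [shiftComplex]
        simp only [Preadditive.zsmul_comp, Preadditive.comp_zsmul, smul_smul,
          eps_mul_eps, one_smul]
    _ = ε • (X.d k (k - 1) ≫ ((g.f (k - 1) : X.X (k - 1) ⟶ (Z).X (k - 1)) ≫
          (castIso Y n (k - 1)).inv) ≫
          (Y.XIsoOfEq (show (k - 1) + n = k + (n - 1) by ring)).hom) := by
        dsimp only [shiftComplex] at hcomm ⊢
        rw [← Category.assoc, hcomm]
        simp only [Category.assoc, castIso,
          HomologicalComplex.XIsoOfEq_inv_comp_XIsoOfEq_hom]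

/-- The additive equivalence between cycles of the Hom-complex and chain maps `X ⟶ Z`. -/
def cyclesEquiv : homCycles X Y n ≃+ (X ⟶ Z) where
  toFun := cycleToHom X Y n
  invFun g := ⟨fun k => ((g.f k : X.X k ⟶ (Z).X k) ≫ (castIso Y n k).inv).hom,
    homToCycle_mem X Y n g⟩
  left_inv f := by
    apply Subtype.ext
    funext k
    show (((ModuleCat.ofHom (f.1 k) : X.X k ⟶ Y.X (k + n)) ≫ (castIso Y n k).hom) ≫ (castIso Y n k).inv).hom = f.1 k
    simp
  right_inv g := by
    apply HomologicalComplex.hom_ext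
    intro k
    show (ModuleCat.ofHom ((g.f k : X.X k ⟶ (Z).X k) ≫ (castIso Y n k).inv).hom) ≫ (castIso Y n k).hom = g.f k
    simp
  map_add' f g := by
    apply HomologicalComplex.hom_ext
    intro k
    show ((ModuleCat.ofHom (f.1 k + g.1 k) : X.X k ⟶ Y.X (k + n))) ≫ (castIso Y n k).hom = _
    rw [show (ModuleCat.ofHom (f.1 k + g.1 k) : X.X k ⟶ Y.X (k + n)) =
      ModuleCat.ofHom (f.1 k) + ModuleCat.ofHom (g.1 k) from rfl, Preadditive.add_comp]
    rfl

lemma homDegD_apply (m : ℤ) (h : HomDeg X Y m) (k : ℤ) :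
    (ModuleCat.ofHom (homDegD X Y m h k) : X.X k ⟶ Y.X (k + (m - 1))) =
      ((ModuleCat.ofHom (h k) : X.X k ⟶ Y.X (k + m)) ≫ Y.d (k + m) (k + (m - 1))) -
        ((Int.negOnePow m : ℤˣ) : ℤ) •
          (X.d k (k - 1) ≫ (ModuleCat.ofHom (h (k - 1)) : X.X (k - 1) ⟶ Y.X (k - 1 + m)) ≫
            (Y.XIsoOfEq (show (k - 1) + m = k + (m - 1) by ring)).hom) := rfl

lemma eps_succ : ((Int.negOnePow (n + 1) : ℤˣ) : ℤ) = -ε := by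
  simp [Int.negOnePow_succ]

lemma rel_pred (i : ℤ) : (ComplexShape.down ℤ).Rel i (i - 1) := by simp
lemma rel_succ (i : ℤ) : (ComplexShape.down ℤ).Rel (i + 1) i := by simp

lemma boundary_nullHomotopic (f : homCycles X Y n)
    (hf : f.1 ∈ homBoundaries X Y n) :
    Nonempty (Homotopy (cycleToHom X Y n f) (0 : X ⟶ Z)) := by
  obtain ⟨h, hh⟩ := hf
  refine ⟨⟨fun i j => if hj : i + 1 = j then
      ε • ((ModuleCat.ofHom (h i) : X.X i ⟶ Y.X (i + (n + 1))) ≫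
        (Y.XIsoOfEq (show i + (n + 1) = j - -n by omega)).hom : X.X i ⟶ (Z).X j)
    else 0, ?_, ?_⟩⟩
  · intro i j hij
    rw [dif_neg]
    intro hc
    exact hij (by simpa using hc)
  · intro i
    rw [dNext_eq _ (rel_pred i), prevD_eq _ (rel_succ i)]
    rw [dif_pos (show i - 1 + 1 = i by omega), dif_pos rfl]
    have hfi : (ModuleCat.ofHom (f.1 i) : X.X i ⟶ Y.X (i + n)) =
        (ModuleCat.ofHom (homDegD X Y (n + 1) h i) : X.X i ⟶ Y.X (i + (n + 1 - 1))) ≫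
          (Y.XIsoOfEq (show i + (n + 1 - 1) = i + n by ring)).hom := by
      conv_lhs => rw [← hh]
      exact homDegCast_apply X Y _ _ i
    show (ModuleCat.ofHom (f.1 i) : X.X i ⟶ Y.X (i + n)) ≫ (castIso Y n i).hom = _
    rw [hfi, homDegD_apply, Z_d]
    dsimp only [shiftComplex]
    simp only [eps_succ, neg_smul, sub_eq_add_neg, neg_neg,
      Preadditive.add_comp, Preadditive.zsmul_comp, Preadditive.comp_zsmul,
      Category.assoc, castIso,
      HomologicalComplex.d_comp_XIsoOfEq_hom,
      HomologicalComplex.XIsoOfEq_hom_comp_d,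
      HomologicalComplex.XIsoOfEq_hom_comp_XIsoOfEq_hom,
      smul_smul, eps_mul_eps, one_smul, HomologicalComplex.zero_f,
      add_zero]
    erw [Preadditive.comp_zsmul, Preadditive.zsmul_comp]
    simp only [Category.assoc, HomologicalComplex.XIsoOfEq_hom_comp_d, smul_smul, eps_mul_eps,
      one_smul]
    abel

lemma homZ_congr (H : ∀ i j, X.X i ⟶ (Z).X j) (a : ℤ) {b b' : ℤ} (hb : b' = b) :
    (H a b' : X.X a ⟶ Y.X (b' - -n)) =
      (H a b : X.X a ⟶ Y.X (b - -n)) ≫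
        (Y.XIsoOfEq (show b - -n = b' - -n by rw [hb])).hom := by
  subst hb
  rw [HomologicalComplex.XIsoOfEq_rfl]
  exact (Category.comp_id _).symm

lemma nullHomotopic_boundary (f : homCycles X Y n)
    (H : Homotopy (cycleToHom X Y n f) (0 : X ⟶ Z)) :
    f.1 ∈ homBoundaries X Y n := by
  refine ⟨fun k => (ε • ((H.hom k (k + 1) : X.X k ⟶ Y.X (k + 1 - -n)) ≫
    (Y.XIsoOfEq (show k + 1 - -n = k + (n + 1) by omega)).hom)).hom, ?_⟩
  funext i
  rw [AddMonoidHom.comp_apply]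
  refine congrArg ModuleCat.Hom.hom (?_ : ModuleCat.ofHom
    ((homDegCast X Y _).toAddMonoidHom (homDegD X Y (n + 1) _) i) = ModuleCat.ofHom (f.1 i))
  rw [AddEquiv.coe_toAddMonoidHom, homDegCast_apply, homDegD_apply]
  have hcomm := H.comm i
  rw [dNext_eq _ (rel_pred i), prevD_eq _ (rel_succ i), Z_d] at hcomm
  have hfi : (ModuleCat.ofHom (f.1 i) : X.X i ⟶ Y.X (i + n)) =
      ((cycleToHom X Y n f).f i : X.X i ⟶ (Z).X i) ≫ (castIso Y n i).inv := by
    show _ = ((ModuleCat.ofHom (f.1 i) ≫ (castIso Y n i).hom) ≫ (castIso Y n i).inv)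
    simp
  rw [hfi, hcomm]
  rw [homZ_congr X Y n H.hom (i - 1) (show i = (i - 1) + 1 by omega)]
  simp only [eps_succ, neg_smul, sub_eq_add_neg, neg_neg, Pi.smul_apply,
    HomologicalComplex.zero_f, add_zero,
    Preadditive.add_comp, Preadditive.comp_add,
    Preadditive.zsmul_comp, Preadditive.comp_zsmul,
    Category.assoc, castIso,
    HomologicalComplex.d_comp_XIsoOfEq_hom,
    HomologicalComplex.XIsoOfEq_hom_comp_d,
    HomologicalComplex.XIsoOfEq_hom_comp_XIsoOfEq_hom,
    HomologicalComplex.XIsoOfEq_hom_comp_XIsoOfEq_inv,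
    HomologicalComplex.d_comp_XIsoOfEq_inv,
    HomologicalComplex.XIsoOfEq_rfl, Iso.refl_hom, Category.comp_id,
    smul_smul, eps_mul_eps, one_smul, neg_neg, one_mul, mul_one, neg_smul]
  erw [Preadditive.comp_zsmul]
  simp only [ModuleCat.ofHom_hom, Preadditive.zsmul_comp, Preadditive.comp_zsmul, Category.assoc,
    HomologicalComplex.d_comp_XIsoOfEq_hom,
    HomologicalComplex.XIsoOfEq_hom_comp_XIsoOfEq_hom,
    HomologicalComplex.XIsoOfEq_hom_comp_XIsoOfEq_inv,
    HomologicalComplex.XIsoOfEq_hom_comp_d,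
    HomologicalComplex.d_comp_XIsoOfEq_inv,
    HomologicalComplex.XIsoOfEq_rfl, Iso.refl_hom, Category.comp_id,
    smul_smul, eps_mul_eps, one_smul, neg_neg, mul_neg, neg_mul, neg_smul, one_mul]
  generalize H.hom = K
  dsimp only [shiftComplex] at K ⊢
  simp only [Category.assoc, Preadditive.zsmul_comp, Preadditive.comp_zsmul,
    HomologicalComplex.XIsoOfEq_hom_comp_d, HomologicalComplex.d_comp_XIsoOfEq_inv,
    HomologicalComplex.XIsoOfEq_hom_comp_XIsoOfEq_hom,
    HomologicalComplex.XIsoOfEq_hom_comp_XIsoOfEq_inv]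
  abel

end Aux

/-- For every integer `n`, the `n`-th homology of the Hom-complex `Hom•(X,Y)` is isomorphic,
as an abelian group, to the group of chain-homotopy classes of chain maps `X ⟶ Σ^{-n} Y`. -/
theorem homComplex_homology_iso_homotopyClasses
    (X Y : ChainComplex (ModuleCat.{u} R) ℤ) (n : ℤ) :
    Nonempty (homHomology X Y n ≃+ HomotopyClasses X (shiftComplex Y (-n))) := by
  have key : AddSubgroup.map
      (cyclesEquiv X Y n).toAddMonoidHom
      ((homBoundaries X Y n).addSubgroupOf (homCycles X Y n)) =
      nullHomotopic X (shiftComplex Y (-n)) := by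
    ext g
    simp only [AddSubgroup.mem_map]
    constructor
    · rintro ⟨f, hf, rfl⟩
      rw [AddSubgroup.mem_addSubgroupOf] at hf
      exact boundary_nullHomotopic X Y n f hf
    · intro hg
      obtain ⟨H⟩ := hg
      refine ⟨(cyclesEquiv X Y n).symm g, ?_, ?_⟩
      · rw [AddSubgroup.mem_addSubgroupOf]
        apply nullHomotopic_boundary X Y n _
        have heq : cycleToHom X Y n ((cyclesEquiv X Y n).symm g) = g :=
          (cyclesEquiv X Y n).apply_symm_apply g
        rw [heq]
        exact H
      · exact (cyclesEquiv X Y n).apply_symm_apply g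
  exact ⟨QuotientAddGroup.congr _ _ (cyclesEquiv X Y n) key⟩
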